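/- Let (X,T) be an NDS, Z ⊂ X_0, and let f be a potential. Then each of the four pressures Q_low, Q_up, P_low, P_up is stable under closure: P(T,f,cl(Z)) = P(T,f,Z) for every P ∈ {Q_low, Q_up, P_low, P_up}, where cl(Z) is the closure of Z in X_0. -/

import Mathlib

open Filter Set
open scoped ENNReal NNReal

noncomputable section

namespace NDS

variable {X : ℕ → Type*}

/-- The orbit maps `T_k^j : X k → X (k+j)` of a nonautonomous system. -/
def iterFrom (T : ∀ k, X k → X (k + 1)) (k : ℕ) : ∀ j, X k → X (k + j)
  | 0 => fun x => x
  | j + 1 => fun x => T (k + j) (iterFrom T k j x)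

/-- The orbit maps `T^j = T_{j-1} ∘ ⋯ ∘ T_0 : X 0 → X j`. -/
def iter (T : ∀ k, X k → X (k + 1)) : ∀ j, X 0 → X j
  | 0 => fun x => x
  | j + 1 => fun x => T j (iter T j x)

variable [∀ k, MetricSpace (X k)]

/-- The `n`-th Bowen metric on `X 0`:  `d_n^T(x,y) = max_{0 ≤ j ≤ n-1} d_j (T^j x) (T^j y)`. -/
def bowenDist (T : ∀ k, X k → X (k + 1)) (n : ℕ) (x y : X 0) : ℝ :=
  (((Finset.range n).sup fun j => nndist (iter T j x) (iter T j y) : ℝ≥0) : ℝ)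

/-- The open Bowen ball `B_n^T(x, ε)`. -/
def bowenBall (T : ∀ k, X k → X (k + 1)) (n : ℕ) (x : X 0) (ε : ℝ) : Set (X 0) :=
  {y | bowenDist T n x y < ε}

/-- The closed Bowen ball `clB_n^T(x, ε)`. -/
def bowenClosedBall (T : ∀ k, X k → X (k + 1)) (n : ℕ) (x : X 0) (ε : ℝ) : Set (X 0) :=
  {y | bowenDist T n x y ≤ ε}

/-- Birkhoff sums starting at level `k`:  `S_{k,n}^T f = Σ_{j<n} f_{k+j} ∘ T_k^j`. -/
def birkFrom (T : ∀ k, X k → X (k + 1)) (f : ∀ k, X k → ℝ) (k n : ℕ) (x : X k) : ℝ :=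
  ∑ j ∈ Finset.range n, f (k + j) (iterFrom T k j x)

/-- Birkhoff sums `S_n^T f = Σ_{j<n} f_j ∘ T^j` on `X 0`. -/
def birk (T : ∀ k, X k → X (k + 1)) (f : ∀ k, X k → ℝ) (n : ℕ) (x : X 0) : ℝ :=
  ∑ j ∈ Finset.range n, f j (iter T j x)

/-- A potential `f = {f_k}` is equicontinuous. -/
def EquicontPotential (f : ∀ k, X k → ℝ) : Prop :=
  ∀ ε : ℝ, 0 < ε → ∃ δ : ℝ, 0 < δ ∧
    ∀ k, ∀ x y : X k, dist x y < δ → |f k x - f k y| < ε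

/-- The sequence of maps `T = {T_k}` is equicontinuous. -/
def EquicontMaps (T : ∀ k, X k → X (k + 1)) : Prop :=
  ∀ ε : ℝ, 0 < ε → ∃ δ : ℝ, 0 < δ ∧
    ∀ k, ∀ x y : X k, dist x y < δ → dist (T k x) (T k y) < ε

/-- `F` is an `(n,ε)`-spanning set for `Z`. -/
def IsSpanning (T : ∀ k, X k → X (k + 1)) (n : ℕ) (ε : ℝ) (Z : Set (X 0))
    (F : Finset (X 0)) : Prop :=
  ∀ x ∈ Z, ∃ y ∈ F, bowenDist T n x y ≤ ε

/-- `E` is an `(n,ε)`-separated set for `Z`. -/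
def IsSeparated (T : ∀ k, X k → X (k + 1)) (n : ℕ) (ε : ℝ) (Z : Set (X 0))
    (E : Finset (X 0)) : Prop :=
  ↑E ⊆ Z ∧ ∀ x ∈ E, ∀ y ∈ E, x ≠ y → ε < bowenDist T n x y

/-- The partition sum `Σ_{x ∈ F} e^{S_n^T f(x)}` (valued in `ℝ≥0∞`). -/
def partSum (T : ∀ k, X k → X (k + 1)) (f : ∀ k, X k → ℝ) (n : ℕ) (F : Finset (X 0)) : ℝ≥0∞ :=
  ∑ x ∈ F, ENNReal.ofReal (Real.exp (birk T f n x))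

/-- `Q_n(T,f,Z,ε)`, infimum over `(n,ε)`-spanning sets. -/
def Qn (T : ∀ k, X k → X (k + 1)) (f : ∀ k, X k → ℝ) (Z : Set (X 0)) (n : ℕ) (ε : ℝ) : ℝ≥0∞ :=
  ⨅ (F : Finset (X 0)) (_ : IsSpanning T n ε Z F), partSum T f n F

/-- `P_n(T,f,Z,ε)`, supremum over `(n,ε)`-separated sets. -/
def Pn (T : ∀ k, X k → X (k + 1)) (f : ∀ k, X k → ℝ) (Z : Set (X 0)) (n : ℕ) (ε : ℝ) : ℝ≥0∞ :=
  ⨆ (E : Finset (X 0)) (_ : IsSeparated T n ε Z E), partSum T f n E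

/-- `liminf_n (1/n) log u n` (in `EReal`). -/
def lowRate (u : ℕ → ℝ≥0∞) : EReal :=
  Filter.atTop.liminf fun n : ℕ => (((n : ℝ)⁻¹ : ℝ) : EReal) * ENNReal.log (u n)

/-- `limsup_n (1/n) log u n` (in `EReal`). -/
def upRate (u : ℕ → ℝ≥0∞) : EReal :=
  Filter.atTop.limsup fun n : ℕ => (((n : ℝ)⁻¹ : ℝ) : EReal) * ENNReal.log (u n)

/-- Lower spanning topological pressure `Q_low(T,f,Z)`; the limit as `ε → 0` is realised as a
supremum over `ε > 0`, the quantity being monotone in `ε`. -/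
def Qlow (T : ∀ k, X k → X (k + 1)) (f : ∀ k, X k → ℝ) (Z : Set (X 0)) : EReal :=
  ⨆ (ε : ℝ) (_ : 0 < ε), lowRate fun n => Qn T f Z n ε

/-- Upper spanning topological pressure `Q_up(T,f,Z)`. -/
def Qup (T : ∀ k, X k → X (k + 1)) (f : ∀ k, X k → ℝ) (Z : Set (X 0)) : EReal :=
  ⨆ (ε : ℝ) (_ : 0 < ε), upRate fun n => Qn T f Z n ε

/-- Lower separated topological pressure `P_low(T,f,Z)`. -/
def Plow (T : ∀ k, X k → X (k + 1)) (f : ∀ k, X k → ℝ) (Z : Set (X 0)) : EReal :=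
  ⨆ (ε : ℝ) (_ : 0 < ε), lowRate fun n => Pn T f Z n ε

/-- Upper separated topological pressure `P_up(T,f,Z)`. -/
def Pup (T : ∀ k, X k → X (k + 1)) (f : ∀ k, X k → ℝ) (Z : Set (X 0)) : EReal :=
  ⨆ (ε : ℝ) (_ : 0 < ε), upRate fun n => Pn T f Z n ε

/-- The critical value `inf {s : M s = 0}` of a "measure profile" `M`, as an extended real. -/
def crit (M : ℝ → ℝ≥0∞) : EReal :=
  sInf (Real.toEReal '' {s : ℝ | M s = 0})

/-- The critical value `sup {s : M s = ∞}` of a "measure profile" `M`, as an extended real. -/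
def critSup (M : ℝ → ℝ≥0∞) : EReal :=
  sSup (Real.toEReal '' {s : ℝ | M s = ⊤})

/-- A countable family of Bowen balls (recorded by their (center, order) data) which is an
`(N,ε)`-cover of `Z`. -/
def IsBowenCover (T : ∀ k, X k → X (k + 1)) (N : ℕ) (ε : ℝ) (Z : Set (X 0))
    (C : Set (X 0 × ℕ)) : Prop :=
  C.Countable ∧ (∀ p ∈ C, N ≤ p.2) ∧ Z ⊆ ⋃ p ∈ C, bowenBall T p.2 p.1 ε

/-- A countable disjoint family of closed Bowen balls with centers in `Z` and orders `≥ N`: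
an `(N,ε)`-packing of `Z`. -/
def IsBowenPacking (T : ∀ k, X k → X (k + 1)) (N : ℕ) (ε : ℝ) (Z : Set (X 0))
    (P : Set (X 0 × ℕ)) : Prop :=
  P.Countable ∧ (∀ p ∈ P, p.1 ∈ Z ∧ N ≤ p.2) ∧
    ∀ p ∈ P, ∀ q ∈ P, p ≠ q →
      Disjoint (bowenClosedBall T p.2 p.1 ε) (bowenClosedBall T q.2 q.1 ε)

/-- `Σ_i exp (-n_i s + S_{n_i}^T f (x_i))` over a family of (center, order) pairs. -/
def ballSum (T : ∀ k, X k → X (k + 1)) (f : ∀ k, X k → ℝ) (s : ℝ) (C : Set (X 0 × ℕ)) : ℝ≥0∞ :=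
  ∑' p : C, ENNReal.ofReal (Real.exp (-(p.1.2 : ℝ) * s + birk T f p.1.2 p.1.1))

/-- The Hausdorff-type pre-measure `M^s_{N,ε}(T,f,Z)`. -/
def bowenPreMeas (T : ∀ k, X k → X (k + 1)) (f : ∀ k, X k → ℝ) (Z : Set (X 0))
    (s : ℝ) (N : ℕ) (ε : ℝ) : ℝ≥0∞ :=
  ⨅ (C : Set (X 0 × ℕ)) (_ : IsBowenCover T N ε Z C), ballSum T f s C

/-- `M^s_ε(T,f,Z) = lim_{N → ∞} M^s_{N,ε}(T,f,Z)` (an increasing limit, i.e. a supremum). -/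
def bowenMeas (T : ∀ k, X k → X (k + 1)) (f : ∀ k, X k → ℝ) (Z : Set (X 0))
    (s : ℝ) (ε : ℝ) : ℝ≥0∞ :=
  ⨆ N : ℕ, bowenPreMeas T f Z s N ε

/-- `P^B(T,f,Z,ε)`: the critical value of `s ↦ M^s_ε(T,f,Z)`. -/
def PBe (T : ∀ k, X k → X (k + 1)) (f : ∀ k, X k → ℝ) (Z : Set (X 0)) (ε : ℝ) : EReal :=
  crit fun s => bowenMeas T f Z s ε

/-- The Bowen (Pesin–Pitskel') topological pressure `P^B(T,f,Z)`; the limit as `ε → 0` is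
realised as a supremum over `ε > 0` by monotonicity. -/
def PB (T : ∀ k, X k → X (k + 1)) (f : ∀ k, X k → ℝ) (Z : Set (X 0)) : EReal :=
  ⨆ (ε : ℝ) (_ : 0 < ε), PBe T f Z ε

/-- The packing pre-measure `𝒫^s_{N,ε}(T,f,Z)`. -/
def packPre (T : ∀ k, X k → X (k + 1)) (f : ∀ k, X k → ℝ) (Z : Set (X 0))
    (s : ℝ) (N : ℕ) (ε : ℝ) : ℝ≥0∞ :=
  ⨆ (P : Set (X 0 × ℕ)) (_ : IsBowenPacking T N ε Z P), ballSum T f s P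

/-- The packing content `𝒫^s_{∞,ε}(T,f,Z) = lim_{N→∞} 𝒫^s_{N,ε}` (a decreasing limit, i.e. an
infimum). -/
def packContent (T : ∀ k, X k → X (k + 1)) (f : ∀ k, X k → ℝ) (Z : Set (X 0))
    (s : ℝ) (ε : ℝ) : ℝ≥0∞ :=
  ⨅ N : ℕ, packPre T f Z s N ε

/-- The packing measure `𝒫^s_ε(T,f,Z)`, obtained from the content by countable decompositions. -/
def packMeas (T : ∀ k, X k → X (k + 1)) (f : ∀ k, X k → ℝ) (Z : Set (X 0))
    (s : ℝ) (ε : ℝ) : ℝ≥0∞ :=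
  ⨅ (D : ℕ → Set (X 0)) (_ : Z ⊆ ⋃ i, D i), ∑' i, packContent T f (D i) s ε

/-- `P^P(T,f,Z,ε)`: the critical value of `s ↦ 𝒫^s_ε(T,f,Z)`. -/
def PPe (T : ∀ k, X k → X (k + 1)) (f : ∀ k, X k → ℝ) (Z : Set (X 0)) (ε : ℝ) : EReal :=
  crit fun s => packMeas T f Z s ε

/-- The packing topological pressure `P^P(T,f,Z)`. -/
def PP (T : ∀ k, X k → X (k + 1)) (f : ∀ k, X k → ℝ) (Z : Set (X 0)) : EReal :=
  ⨆ (ε : ℝ) (_ : 0 < ε), PPe T f Z ε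

end NDS

namespace NDS

variable {X : ℕ → Type*} [∀ k, MetricSpace (X k)]

-- ## Auxiliary lemmas

lemma continuous_iter (T : ∀ k, X k → X (k + 1)) (hT : ∀ k, Continuous (T k)) :
    ∀ j, Continuous (iter T j)
  | 0 => continuous_id
  | j + 1 => (hT j).comp (continuous_iter T hT j)

lemma continuous_finsetSup {Y : Type*} [TopologicalSpace Y] (s : Finset ℕ)
    (g : ℕ → Y → ℝ≥0) (hg : ∀ i, Continuous (g i)) :
    Continuous fun y => (s.sup fun i => g i y : ℝ≥0) := by
  classical
  induction s using Finset.induction_on with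
  | empty => simpa using continuous_const
  | insert _ _ h ih =>
    simp only [Finset.sup_insert]
    exact (hg _).sup ih

lemma continuous_bowenDist_left (T : ∀ k, X k → X (k + 1)) (hT : ∀ k, Continuous (T k))
    (n : ℕ) (y : X 0) : Continuous fun x => bowenDist T n x y := by
  exact NNReal.continuous_coe.comp <| continuous_finsetSup _ _
    fun j => (continuous_iter T hT j).nndist continuous_const

lemma continuous_bowenDist_right (T : ∀ k, X k → X (k + 1)) (hT : ∀ k, Continuous (T k))
    (n : ℕ) (x : X 0) : Continuous fun y => bowenDist T n x y := by
  exact NNReal.continuous_coe.comp <| continuous_finsetSup _ _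
    fun j => continuous_const.nndist (continuous_iter T hT j)

lemma continuous_birk (T : ∀ k, X k → X (k + 1)) (hT : ∀ k, Continuous (T k))
    (f : ∀ k, X k → ℝ) (hf : ∀ k, Continuous (f k)) (n : ℕ) :
    Continuous fun x => birk T f n x :=
  continuous_finset_sum _ fun j _ => (hf j).comp (continuous_iter T hT j)

lemma bowenDist_self (T : ∀ k, X k → X (k + 1)) (n : ℕ) (x : X 0) :
    bowenDist T n x x = 0 := by
  simp [bowenDist]

lemma bowenDist_comm (T : ∀ k, X k → X (k + 1)) (n : ℕ) (x y : X 0) :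
    bowenDist T n x y = bowenDist T n y x := by
  simp [bowenDist, nndist_comm]

lemma bowenDist_triangle (T : ∀ k, X k → X (k + 1)) (n : ℕ) (x y z : X 0) :
    bowenDist T n x z ≤ bowenDist T n x y + bowenDist T n y z := by
  have : ((Finset.range n).sup fun j => nndist (iter T j x) (iter T j z)) ≤
      ((Finset.range n).sup fun j => nndist (iter T j x) (iter T j y)) +
      ((Finset.range n).sup fun j => nndist (iter T j y) (iter T j z)) :=
    Finset.sup_le fun j hj =>
      le_trans (nndist_triangle (iter T j x) (iter T j y) (iter T j z))
        (add_le_add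
          (Finset.le_sup (f := fun j => nndist (iter T j x) (iter T j y)) hj)
          (Finset.le_sup (f := fun j => nndist (iter T j y) (iter T j z)) hj))
  exact_mod_cast this

lemma isSpanning_closure {T : ∀ k, X k → X (k + 1)} (hT : ∀ k, Continuous (T k))
    {n : ℕ} {ε : ℝ} {Z : Set (X 0)} {F : Finset (X 0)}
    (h : IsSpanning T n ε Z F) : IsSpanning T n ε (closure Z) F := by
  intro x hx
  set S : Set (X 0) := ⋃ y ∈ (F : Set (X 0)), {z | bowenDist T n z y ≤ ε} with hS
  have hcl : IsClosed S := by
    refine Set.Finite.isClosed_biUnion F.finite_toSet fun y _ => ?_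
    exact isClosed_le (continuous_bowenDist_left T hT n y) continuous_const
  have hsub : Z ⊆ S := fun z hz => by
    obtain ⟨y, hyF, hd⟩ := h z hz
    exact Set.mem_biUnion hyF hd
  have hxS : x ∈ S := closure_minimal hsub hcl hx
  obtain ⟨y, hyF, hd⟩ := Set.mem_iUnion₂.1 hxS
  exact ⟨y, hyF, hd⟩

lemma Qn_closure (T : ∀ k, X k → X (k + 1)) (hT : ∀ k, Continuous (T k))
    (f : ∀ k, X k → ℝ) (Z : Set (X 0)) (n : ℕ) (ε : ℝ) :
    Qn T f (closure Z) n ε = Qn T f Z n ε := by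
  refine le_antisymm ?_ ?_
  · exact le_iInf₂ fun F hF => iInf₂_le F (isSpanning_closure hT hF)
  · exact le_iInf₂ fun F hF => iInf₂_le F fun x hx => hF x (subset_closure hx)

lemma Pn_mono_set (T : ∀ k, X k → X (k + 1)) (f : ∀ k, X k → ℝ) (n : ℕ) (ε : ℝ)
    {Z W : Set (X 0)} (h : Z ⊆ W) : Pn T f Z n ε ≤ Pn T f W n ε :=
  iSup₂_le fun E hE =>
    le_iSup₂ (f := fun (E : Finset (X 0)) (_ : IsSeparated T n ε W E) => partSum T f n E)
      E ⟨hE.1.trans h, hE.2⟩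

lemma Pn_closure_le (T : ∀ k, X k → X (k + 1)) (hT : ∀ k, Continuous (T k))
    (f : ∀ k, X k → ℝ) (hf : ∀ k, Continuous (f k)) (Z : Set (X 0)) (n : ℕ)
    {ε ε' : ℝ} (hε' : 0 < ε') (hlt : ε' < ε) :
    Pn T f (closure Z) n ε ≤ Pn T f Z n ε' := by
  classical
  refine iSup₂_le fun E hE => ?_
  refine ENNReal.le_of_forall_pos_le_add fun r hr _ => ?_
  set δ : ℝ := (ε - ε') / 2 with hδdef
  have hδ : 0 < δ := by simp only [hδdef]; linarith
  set r' : ℝ := (r : ℝ) / (E.card + 1) with hr'def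
  have hcard : (0:ℝ) < (E.card : ℝ) + 1 := by positivity
  have hr' : 0 < r' := div_pos hr hcard
  have key : ∀ x : X 0, ∃ y, x ∈ E → y ∈ Z ∧ bowenDist T n x y < δ ∧
      Real.exp (birk T f n x) ≤ Real.exp (birk T f n y) + r' := by
    intro x
    by_cases hx : x ∈ E
    · have hxcl : x ∈ closure Z := hE.1 hx
      have hopen : IsOpen {y | bowenDist T n x y < δ ∧
          Real.exp (birk T f n x) - r' < Real.exp (birk T f n y)} := by
        have h1 : IsOpen {y : X 0 | bowenDist T n x y < δ} :=
          isOpen_lt (continuous_bowenDist_right T hT n x) continuous_const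
        have h2 : IsOpen {y : X 0 |
            Real.exp (birk T f n x) - r' < Real.exp (birk T f n y)} :=
          isOpen_lt continuous_const
            (Real.continuous_exp.comp (continuous_birk T hT f hf n))
        exact (Set.setOf_and (q := fun y : X 0 =>
          Real.exp (birk T f n x) - r' < Real.exp (birk T f n y))
          (p := fun y : X 0 => bowenDist T n x y < δ)) ▸ h1.inter h2
      have hxmem : x ∈ {y | bowenDist T n x y < δ ∧
          Real.exp (birk T f n x) - r' < Real.exp (birk T f n y)} := by
        refine ⟨by rw [bowenDist_self]; exact hδ, by linarith⟩
      obtain ⟨y, hy1, hy2⟩ := _root_.mem_closure_iff.1 hxcl _ hopen hxmem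
      exact ⟨y, fun _ => ⟨hy2, hy1.1, by linarith [hy1.2]⟩⟩
    · exact ⟨x, fun h => absurd h hx⟩
  choose g hg using key
  have hclose : ∀ x ∈ E, bowenDist T n x (g x) < δ := fun x hx => (hg x hx).2.1
  have hgap : ∀ x ∈ E, ∀ y ∈ E, x ≠ y → ε' < bowenDist T n (g x) (g y) := by
    intro x hx y hy hxy
    have h1 := hE.2 x hx y hy hxy
    have t1 := bowenDist_triangle T n x (g x) y
    have t2 := bowenDist_triangle T n (g x) (g y) y
    have t3 : bowenDist T n (g y) y = bowenDist T n y (g y) := bowenDist_comm T n _ _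
    have c1 := hclose x hx
    have c2 := hclose y hy
    have hδ2 : ε - 2 * δ = ε' := by simp only [hδdef]; ring
    linarith
  have hinj : ∀ x ∈ E, ∀ y ∈ E, g x = g y → x = y := by
    intro x hx y hy hxy
    by_contra hne
    have := hgap x hx y hy hne
    rw [hxy, bowenDist_self] at this
    linarith
  have hsep : IsSeparated T n ε' Z (E.image g) := by
    constructor
    · intro y hy
      simp only [Finset.coe_image, Set.mem_image, Finset.mem_coe] at hy
      obtain ⟨x, hx, rfl⟩ := hy
      exact (hg x hx).1
    · intro a ha b hb hab
      obtain ⟨x, hx, rfl⟩ := Finset.mem_image.1 ha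
      obtain ⟨y, hy, rfl⟩ := Finset.mem_image.1 hb
      exact hgap x hx y hy fun h => hab (by rw [h])
  calc partSum T f n E
      ≤ ∑ x ∈ E, (ENNReal.ofReal (Real.exp (birk T f n (g x))) + ENNReal.ofReal r') := by
        refine Finset.sum_le_sum fun x hx => ?_
        calc ENNReal.ofReal (Real.exp (birk T f n x))
            ≤ ENNReal.ofReal (Real.exp (birk T f n (g x)) + r') :=
              ENNReal.ofReal_le_ofReal (hg x hx).2.2
          _ ≤ _ := ENNReal.ofReal_add_le
    _ = (∑ x ∈ E, ENNReal.ofReal (Real.exp (birk T f n (g x))))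
        + E.card • ENNReal.ofReal r' := by
        rw [Finset.sum_add_distrib, Finset.sum_const]
    _ ≤ Pn T f Z n ε' + r := by
        refine add_le_add ?_ ?_
        · have hsum : ∑ x ∈ E.image g, ENNReal.ofReal (Real.exp (birk T f n x))
              = ∑ x ∈ E, ENNReal.ofReal (Real.exp (birk T f n (g x))) :=
            Finset.sum_image hinj
          rw [← hsum]
          exact le_iSup₂ (f := fun (E : Finset (X 0)) (_ : IsSeparated T n ε' Z E) =>
            partSum T f n E) (E.image g) hsep
        · rw [nsmul_eq_mul]
          calc (E.card : ℝ≥0∞) * ENNReal.ofReal r'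
              = ENNReal.ofReal ((E.card : ℝ) * r') := by
                rw [ENNReal.ofReal_mul (Nat.cast_nonneg _), ENNReal.ofReal_natCast]
            _ ≤ (r : ℝ≥0∞) := by
                rw [← ENNReal.ofReal_coe_nnreal]
                refine ENNReal.ofReal_le_ofReal ?_
                have h1 : r' * ((E.card : ℝ) + 1) = (r : ℝ) :=
                  div_mul_cancel₀ _ (ne_of_gt hcard)
                nlinarith [hr'.le]

lemma lowRate_mono {u v : ℕ → ℝ≥0∞} (h : ∀ n, u n ≤ v n) : lowRate u ≤ lowRate v :=
  liminf_le_liminf (Eventually.of_forall fun n =>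
    mul_le_mul_of_nonneg_left (ENNReal.log_monotone (h n))
      (EReal.coe_nonneg.2 (by positivity)))

lemma upRate_mono {u v : ℕ → ℝ≥0∞} (h : ∀ n, u n ≤ v n) : upRate u ≤ upRate v :=
  limsup_le_limsup (Eventually.of_forall fun n =>
    mul_le_mul_of_nonneg_left (ENNReal.log_monotone (h n))
      (EReal.coe_nonneg.2 (by positivity)))

end NDS



/-- The lower/upper spanning and separated pressures are stable under
taking the closure of the subset. -/
theorem pressure_closure_stability {X : ℕ → Type*} [∀ k, MetricSpace (X k)]
    [∀ k, CompactSpace (X k)] (T : ∀ k, X k → X (k + 1)) (hT : ∀ k, Continuous (T k))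
    (f : ∀ k, X k → ℝ) (hf : ∀ k, Continuous (f k)) (Z : Set (X 0)) :
    NDS.Qlow T f (closure Z) = NDS.Qlow T f Z ∧
    NDS.Qup T f (closure Z) = NDS.Qup T f Z ∧
    NDS.Plow T f (closure Z) = NDS.Plow T f Z ∧
    NDS.Pup T f (closure Z) = NDS.Pup T f Z := by
  have hQn : ∀ (n : ℕ) (ε : ℝ), NDS.Qn T f (closure Z) n ε = NDS.Qn T f Z n ε :=
    fun n ε => NDS.Qn_closure T hT f Z n ε
  refine ⟨?_, ?_, ?_, ?_⟩
  · unfold NDS.Qlow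
    exact iSup_congr fun ε => iSup_congr fun _ => congrArg _ (funext fun n => hQn n ε)
  · unfold NDS.Qup
    exact iSup_congr fun ε => iSup_congr fun _ => congrArg _ (funext fun n => hQn n ε)
  · refine le_antisymm ?_ ?_
    · refine iSup₂_le fun ε hε => ?_
      refine le_trans (NDS.lowRate_mono fun n =>
        NDS.Pn_closure_le T hT f hf Z n (half_pos hε) (half_lt_self hε)) ?_
      exact le_iSup₂ (f := fun (ε : ℝ) (_ : 0 < ε) =>
        NDS.lowRate fun n => NDS.Pn T f Z n ε) (ε / 2) (half_pos hε)
    · refine iSup₂_le fun ε hε => ?_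
      refine le_trans (NDS.lowRate_mono fun n =>
        NDS.Pn_mono_set T f n ε subset_closure) ?_
      exact le_iSup₂ (f := fun (ε : ℝ) (_ : 0 < ε) =>
        NDS.lowRate fun n => NDS.Pn T f (closure Z) n ε) ε hε
  · refine le_antisymm ?_ ?_
    · refine iSup₂_le fun ε hε => ?_
      refine le_trans (NDS.upRate_mono fun n =>
        NDS.Pn_closure_le T hT f hf Z n (half_pos hε) (half_lt_self hε)) ?_
      exact le_iSup₂ (f := fun (ε : ℝ) (_ : 0 < ε) =>
        NDS.upRate fun n => NDS.Pn T f Z n ε) (ε / 2) (half_pos hε)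
    · refine iSup₂_le fun ε hε => ?_
      refine le_trans (NDS.upRate_mono fun n =>
        NDS.Pn_mono_set T f n ε subset_closure) ?_
      exact le_iSup₂ (f := fun (ε : ℝ) (_ : 0 < ε) =>
        NDS.upRate fun n => NDS.Pn T f (closure Z) n ε) ε hε
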